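/- If W : (0,∞) → ℝ is defined by W(r) = 1/r² − K₁(r)/r, where K₁ is the modified Bessel function of the second kind of order 1, then the radial function x ↦ W(|x|) on ℝ⁴ ∖ {0} satisfies −ΔW + W = 1/|x|² pointwise. -/

import Mathlib

noncomputable section

abbrev E4 := EuclideanSpace ℝ (Fin 4)

def lap (f : E4 → ℝ) (x : E4) : ℝ :=
  ∑ i : Fin 4, iteratedDeriv 2 (fun t : ℝ => f (x + t • EuclideanSpace.single i (1:ℝ))) 0

/-- The modified Bessel function of the second kind of order 1,
via its integral representation. -/
def besselK1 (r : ℝ) : ℝ :=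
  ∫ t in Set.Ioi (0:ℝ), Real.exp (-r * Real.cosh t) * Real.cosh t

def Wfun (r : ℝ) : ℝ := 1 / r^2 - besselK1 r / r

open Real MeasureTheory Set Filter Topology

def Kn (n : ℕ) (r : ℝ) : ℝ := ∫ t in Ioi (0:ℝ), exp (-r * cosh t) * cosh t ^ n

lemma kernel_nonneg (n : ℕ) (r t : ℝ) : 0 ≤ exp (-r * cosh t) * cosh t ^ n :=
  mul_nonneg (exp_pos _).le (pow_nonneg (cosh_pos t).le _)

lemma kernel_eventually_le (n : ℕ) {r : ℝ} (hr : 0 < r) :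
    ∀ᶠ t in atTop, exp (-r * cosh t) * cosh t ^ n ≤ exp (-t) := by
  filter_upwards [eventually_ge_atTop (0:ℝ), eventually_ge_atTop (8*(n+1)/r)] with t ht0 ht1
  have hcosh_le : cosh t ≤ exp t := by
    rw [Real.cosh_eq]
    have := exp_le_exp.2 (neg_le_self ht0)
    linarith
  have hcosh_ge : exp t / 2 ≤ cosh t := by
    rw [Real.cosh_eq]; nlinarith [exp_pos (-t)]
  have hexp_quad : t^2/4 ≤ exp t := by
    have h1 : 1 + t/2 ≤ exp (t/2) := by linarith [Real.add_one_le_exp (t/2)]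
    have h2 : exp (t/2) * exp (t/2) = exp t := by rw [← Real.exp_add]; ring_nf
    nlinarith [exp_pos (t/2)]
  have htr : 8*((n:ℝ)+1) ≤ t * r := by
    have := div_mul_cancel₀ (8*((n:ℝ)+1)) hr.ne'
    nlinarith [mul_le_mul_of_nonneg_right ht1 hr.le]
  have key : (n+1 : ℝ) * t ≤ r * cosh t := by
    have h3 : r * (t^2/8) ≤ r * cosh t := by
      have : t^2/8 ≤ cosh t := by nlinarith
      exact mul_le_mul_of_nonneg_left this hr.le
    nlinarith [mul_le_mul_of_nonneg_left htr ht0]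
  calc exp (-r * cosh t) * cosh t ^ n ≤ exp (-r * cosh t) * exp t ^ n := by
        gcongr
    _ = exp (n * t - r * cosh t) := by
        rw [← Real.exp_nat_mul, ← Real.exp_add]; ring_nf
    _ ≤ exp (-t) := by apply exp_le_exp.2; push_cast at key ⊢; linarith

lemma kernel_integrable (n : ℕ) {r : ℝ} (hr : 0 < r) :
    IntegrableOn (fun t => exp (-r * cosh t) * cosh t ^ n) (Ioi (0:ℝ)) := by
  apply integrable_of_isBigO_exp_neg (b := 1) one_pos
  · fun_prop
  · rw [Asymptotics.isBigO_iff]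
    refine ⟨1, ?_⟩
    filter_upwards [kernel_eventually_le n hr] with t ht
    rw [Real.norm_eq_abs, Real.norm_eq_abs, abs_of_nonneg (kernel_nonneg n r t),
      abs_of_nonneg (exp_pos _).le, one_mul, neg_one_mul]
    exact ht

lemma hasDerivAt_Kn (n : ℕ) {r : ℝ} (hr : 0 < r) :
    HasDerivAt (Kn n) (-(Kn (n+1) r)) r := by
  have h2 : (0:ℝ) < r/2 := by linarith
  have key := hasDerivAt_integral_of_dominated_loc_of_deriv_le (μ := volume.restrict (Ioi (0:ℝ)))
    (F := fun x t => exp (-x * cosh t) * cosh t ^ n)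
    (F' := fun x t => -(exp (-x * cosh t) * cosh t ^ (n+1)))
    (x₀ := r) (bound := fun t => exp (-(r/2) * cosh t) * cosh t ^ (n+1))
    (Metric.ball_mem_nhds r (half_pos hr)) ?_ (kernel_integrable n hr) ?_ ?_ ?_ ?_
  · refine key.2.congr_deriv ?_
    rw [MeasureTheory.integral_neg]
    rfl
  · filter_upwards with x
    apply Continuous.aestronglyMeasurable
    fun_prop
  · apply Continuous.aestronglyMeasurable
    fun_prop
  · filter_upwards with t
    intro y hy
    rw [Metric.mem_ball, Real.dist_eq] at hy
    have hy2 : r/2 ≤ y := by cases abs_lt.1 hy; linarith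
    rw [norm_neg, Real.norm_eq_abs, abs_of_nonneg (kernel_nonneg (n+1) y t)]
    have : exp (-y * cosh t) ≤ exp (-(r/2) * cosh t) :=
      exp_le_exp.2 (by nlinarith [cosh_pos t])
    gcongr
  · exact kernel_integrable (n+1) h2
  · filter_upwards with t
    intro y hy
    have h := ((hasDerivAt_id y).neg.mul_const (cosh t)).exp.mul_const (cosh t ^ n)
    refine h.congr_deriv ?_
    simp
    ring

lemma abs_sinh_le_cosh (t : ℝ) : |sinh t| ≤ cosh t := by
  rw [abs_le]
  constructor <;> [skip; skip] <;>
    · rw [Real.sinh_eq, Real.cosh_eq]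
      nlinarith [exp_pos t, exp_pos (-t)]

lemma bessel_ode {r : ℝ} (hr : 0 < r) :
    r^2 * Kn 3 r - r * Kn 2 r - (r^2+1) * Kn 1 r = 0 := by
  set F : ℝ → ℝ := fun t => exp (-r * cosh t) * (-r * sinh t * cosh t - sinh t) with hF
  set f : ℝ → ℝ := fun t =>
      exp (-r * cosh t) * (r^2 * cosh t ^3 - r * cosh t ^2 - (r^2+1) * cosh t) with hf
  have hderiv : ∀ t : ℝ, HasDerivAt F (f t) t := by
    intro t
    have h1 : HasDerivAt (fun t => exp (-r * cosh t)) (exp (-r * cosh t) * (-r * sinh t)) t :=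
      ((Real.hasDerivAt_cosh t).const_mul (-r)).exp
    have h2 : HasDerivAt (fun t => -r * sinh t * cosh t - sinh t)
        ((-r * cosh t) * cosh t + (-r * sinh t) * sinh t - cosh t) t :=
      (((Real.hasDerivAt_sinh t).const_mul (-r)).mul (Real.hasDerivAt_cosh t)).sub
        (Real.hasDerivAt_sinh t)
    have h3 := h1.mul h2
    refine h3.congr_deriv ?_
    have hs : sinh t ^ 2 = cosh t ^ 2 - 1 := by
      have := Real.cosh_sq t; linarith
    simp only [hf]
    linear_combination (exp (-r * cosh t) * r^2 * cosh t) * hs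
  have hint : IntegrableOn f (Ioi (0:ℝ)) := by
    have h := (((kernel_integrable 3 hr).const_mul (r^2)).sub
      ((kernel_integrable 2 hr).const_mul r)).sub
      ((kernel_integrable 1 hr).const_mul (r^2+1))
    apply h.congr
    filter_upwards with t
    simp only [Pi.sub_apply, hf]
    ring
  have htend0 : Tendsto (fun t : ℝ => (r+1) * exp (-t)) atTop (𝓝 0) := by
    simpa using (Real.tendsto_exp_neg_atTop_nhds_zero.const_mul (r+1))
  have hbound : ∀ᶠ t in atTop, ‖F t‖ ≤ (r+1) * exp (-t) := by
    filter_upwards [kernel_eventually_le 2 hr, kernel_eventually_le 1 hr] with t hb2 hb1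
    have hsc := abs_sinh_le_cosh t
    have hc := Real.cosh_pos t
    have hE := exp_pos (-r * cosh t)
    rw [hF, Real.norm_eq_abs, abs_mul, abs_of_pos hE]
    have habs : |(-r * sinh t * cosh t - sinh t)| ≤ r * cosh t ^2 + cosh t := by
      rw [abs_le] at hsc ⊢
      obtain ⟨hs1, hs2⟩ := hsc
      constructor <;> nlinarith [mul_nonneg (mul_nonneg hr.le hc.le) (sub_nonneg.2 hs2),
        mul_nonneg (mul_nonneg hr.le hc.le) (by linarith : (0:ℝ) ≤ cosh t + sinh t)]
    calc exp (-r * cosh t) * |(-r * sinh t * cosh t - sinh t)|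
        ≤ exp (-r * cosh t) * (r * cosh t ^2 + cosh t) := by gcongr
      _ = r * (exp (-r * cosh t) * cosh t ^2) + exp (-r * cosh t) * cosh t ^1 := by ring
      _ ≤ r * exp (-t) + exp (-t) := by gcongr
      _ = (r+1) * exp (-t) := by ring
  have htend : Tendsto F atTop (𝓝 0) := squeeze_zero_norm' hbound htend0
  have hFTC := integral_Ioi_of_hasDerivAt_of_tendsto
    (hderiv 0).continuousAt.continuousWithinAt (fun t _ => hderiv t) hint htend
  have hF0 : F 0 = 0 := by rw [hF]; simp
  rw [hF0, sub_zero] at hFTC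
  have hsplit : ∫ t in Ioi (0:ℝ), f t
      = r^2 * Kn 3 r - r * Kn 2 r - (r^2+1) * Kn 1 r := by
    calc ∫ t in Ioi (0:ℝ), f t
        = ∫ t in Ioi (0:ℝ), (r^2 * (exp (-r * cosh t) * cosh t ^3)
            - r * (exp (-r * cosh t) * cosh t ^2)
            - (r^2+1) * (exp (-r * cosh t) * cosh t ^1)) := by
          congr 1; funext t; rw [hf]; ring
      _ = r^2 * Kn 3 r - r * Kn 2 r - (r^2+1) * Kn 1 r := by
          have i3 : Integrable (fun t => r^2 * (exp (-r * cosh t) * cosh t ^3))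
              (volume.restrict (Ioi 0)) := (kernel_integrable 3 hr).const_mul _
          have i2 : Integrable (fun t => r * (exp (-r * cosh t) * cosh t ^2))
              (volume.restrict (Ioi 0)) := (kernel_integrable 2 hr).const_mul _
          have i1 : Integrable (fun t => (r^2+1) * (exp (-r * cosh t) * cosh t ^1))
              (volume.restrict (Ioi 0)) := (kernel_integrable 1 hr).const_mul _
          have i32 : Integrable (fun t => r^2 * (exp (-r * cosh t) * cosh t ^3)
              - r * (exp (-r * cosh t) * cosh t ^2)) (volume.restrict (Ioi 0)) := i3.sub i2
          rw [integral_sub i32 i1, integral_sub i3 i2,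
            MeasureTheory.integral_const_mul, MeasureTheory.integral_const_mul, MeasureTheory.integral_const_mul]
          rfl
  rw [hsplit] at hFTC
  rw [hFTC]

lemma besselK1_eq_Kn (r : ℝ) : besselK1 r = Kn 1 r := by
  unfold besselK1 Kn
  simp [pow_one]

def W1 (r : ℝ) : ℝ := -2/r^3 + Kn 2 r / r + Kn 1 r / r^2
def W2 (r : ℝ) : ℝ := 6/r^4 - Kn 3 r / r - 2*Kn 2 r / r^2 - 2*Kn 1 r / r^3

lemma hasDerivAt_Wfun {r : ℝ} (hr : 0 < r) : HasDerivAt Wfun (W1 r) r := by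
  have hW : Wfun = fun s => 1 / s^2 - Kn 1 s / s := by
    funext s; rw [Wfun, besselK1_eq_Kn]
  rw [hW]
  have h1 : HasDerivAt (fun s : ℝ => 1 / s^2)
      ((0 * r^2 - 1 * (2 * r^(2-1))) / (r^2)^2) r :=
    (hasDerivAt_const r 1).div (hasDerivAt_pow 2 r) (pow_ne_zero 2 hr.ne')
  have h2 : HasDerivAt (fun s : ℝ => Kn 1 s / s)
      ((-(Kn 2 r) * r - Kn 1 r * 1) / r^2) r :=
    (hasDerivAt_Kn 1 hr).div (hasDerivAt_id r) hr.ne'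
  refine (h1.sub h2).congr_deriv ?_
  unfold W1
  field_simp
  ring

lemma hasDerivAt_W1 {r : ℝ} (hr : 0 < r) : HasDerivAt W1 (W2 r) r := by
  have h1 : HasDerivAt (fun s : ℝ => -2 / s^3)
      ((0 * r^3 - (-2) * (3 * r^(3-1))) / (r^3)^2) r :=
    (hasDerivAt_const r (-2)).div (hasDerivAt_pow 3 r) (pow_ne_zero 3 hr.ne')
  have h2 : HasDerivAt (fun s : ℝ => Kn 2 s / s)
      ((-(Kn 3 r) * r - Kn 2 r * 1) / r^2) r :=
    (hasDerivAt_Kn 2 hr).div (hasDerivAt_id r) hr.ne'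
  have h3 : HasDerivAt (fun s : ℝ => Kn 1 s / s^2)
      ((-(Kn 2 r) * r^2 - Kn 1 r * (2 * r^(2-1))) / (r^2)^2) r :=
    (hasDerivAt_Kn 1 hr).div (hasDerivAt_pow 2 r) (pow_ne_zero 2 hr.ne')
  have h := (h1.add h2).add h3
  refine h.congr_deriv ?_
  unfold W2
  field_simp
  ring

lemma ode2 {r : ℝ} (hr : 0 < r) : W2 r + 3 * W1 r / r = -(Kn 1 r) / r := by
  have h := bessel_ode hr
  have hK3 : Kn 3 r = (r * Kn 2 r + (r^2+1) * Kn 1 r) / r^2 := by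
    field_simp
    linarith
  unfold W1 W2
  rw [hK3]
  field_simp
  ring

lemma sq_coord_le (x : E4) (i : Fin 4) : (x i)^2 ≤ ‖x‖^2 := by
  rw [EuclideanSpace.norm_eq, Real.sq_sqrt (by positivity)]
  exact Finset.single_le_sum (f := fun j => ‖x j‖^2) (fun j _ => by positivity)
    (Finset.mem_univ i) |>.trans_eq' (by simp [sq_abs])

lemma second_dir (x : E4) (hx : x ≠ 0) (i : Fin 4) :
    iteratedDeriv 2 (fun t : ℝ => Wfun ‖x + t • EuclideanSpace.single i (1:ℝ)‖) 0
      = W2 ‖x‖ * ((x i)^2 / ‖x‖^2) + W1 ‖x‖ * (1/‖x‖ - (x i)^2 / ‖x‖^3) := by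
  set r := ‖x‖ with hr'
  have hr : 0 < r := norm_pos_iff.2 hx
  set c := x i with hc'
  have hc2 : c^2 ≤ r^2 := sq_coord_le x i
  have hnorm : ∀ t : ℝ, ‖x + t • EuclideanSpace.single i (1:ℝ)‖
      = Real.sqrt (r^2 + 2*c*t + t^2) := by
    intro t
    rw [← Real.sqrt_sq (norm_nonneg (x + t • EuclideanSpace.single i (1:ℝ)))]
    congr 1
    rw [norm_add_sq_real, real_inner_smul_right, EuclideanSpace.inner_single_right]
    simp [norm_smul, sq_abs]
    ring
  set s : ℝ → ℝ := fun t => Real.sqrt (r^2 + 2*c*t + t^2) with hs'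
  have hq : ∀ t : ℝ, |t| < r → 0 < r^2 + 2*c*t + t^2 := by
    intro t ht
    have ht2 : t^2 < r^2 := by
      rw [← sq_abs t]; exact pow_lt_pow_left₀ ht (abs_nonneg t) (by norm_num)
    nlinarith [sq_nonneg (t + c), sq_nonneg (t - c)]
  have hspos : ∀ t : ℝ, |t| < r → 0 < s t := fun t ht => Real.sqrt_pos.2 (hq t ht)
  have hsd : ∀ t : ℝ, |t| < r → HasDerivAt s ((c + t) / s t) t := by
    intro t ht
    have hqt := hq t ht
    have hpoly : HasDerivAt (fun u : ℝ => r^2 + 2*c*u + u^2) (2*c + 2*t) t := by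
      have h1 : HasDerivAt (fun u : ℝ => r^2 + 2*c*u) (2*c) t := by
        simpa using ((hasDerivAt_id t).const_mul (2*c)).const_add (r^2)
      have h2 : HasDerivAt (fun u : ℝ => u^2) (2*t) t := by
        simpa using hasDerivAt_pow 2 t
      exact h1.add h2
    have h := (Real.hasDerivAt_sqrt hqt.ne').comp t hpoly
    refine h.congr_deriv ?_
    have h0 : Real.sqrt (r^2 + 2*c*t + t^2) ≠ 0 := Real.sqrt_ne_zero'.2 hqt
    simp only [hs']
    field_simp
  have hWd : ∀ t : ℝ, |t| < r →
      HasDerivAt (fun u => Wfun (s u)) (W1 (s t) * ((c + t) / s t)) t := by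
    intro t ht
    exact (hasDerivAt_Wfun (hspos t ht)).comp t (hsd t ht)
  have hball : Set.Ioo (-r) r ∈ nhds (0:ℝ) := isOpen_Ioo.mem_nhds (by constructor <;> linarith)
  have hfun_eq : (fun t : ℝ => Wfun ‖x + t • EuclideanSpace.single i (1:ℝ)‖)
      = fun t => Wfun (s t) := by
    funext t; rw [hnorm t]
  have hd1 : deriv (fun u => Wfun (s u)) =ᶠ[nhds (0:ℝ)]
      (fun t => W1 (s t) * ((c + t) / s t)) := by
    filter_upwards [hball] with t ht
    exact (hWd t (abs_lt.2 ht)).deriv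
  have hs0 : s 0 = r := by
    rw [hs']
    simp only
    rw [show r^2 + 2*c*0 + 0^2 = r^2 by ring, Real.sqrt_sq hr.le]
  have h0r : |(0:ℝ)| < r := by simpa using hr
  have hderiv2 : HasDerivAt (fun t => W1 (s t) * ((c + t) / s t))
      (W2 r * (c / r) * ((c + 0) / s 0)
        + W1 (s 0) * ((1 * s 0 - (c + 0) * ((c + 0) / s 0)) / (s 0)^2)) 0 := by
    have h1 : HasDerivAt s (c / r) 0 := by
      have := hsd 0 h0r
      rwa [add_zero, hs0] at this
    have h2 : HasDerivAt (fun t => W1 (s t)) (W2 r * (c / r)) 0 := by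
      have hs0pos : 0 < s 0 := by rw [hs0]; exact hr
      have hW := hasDerivAt_W1 hs0pos
      have := hW.comp 0 h1
      simpa [Function.comp_def, hs0] using this
    have h3 : HasDerivAt (fun t : ℝ => c + t) 1 0 := by
      simpa using (hasDerivAt_id (0:ℝ)).const_add c
    have h1' : HasDerivAt s ((c + 0) / s 0) 0 := by rwa [add_zero, hs0]
    have h4 : HasDerivAt (fun t => (c + t) / s t)
        ((1 * s 0 - (c + 0) * ((c + 0) / s 0)) / (s 0)^2) 0 :=
      h3.div h1' (hspos 0 h0r).ne'
    exact h2.mul h4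
  rw [hfun_eq]
  rw [iteratedDeriv_succ, iteratedDeriv_one]
  rw [hd1.deriv_eq, hderiv2.deriv]
  rw [hs0, add_zero]
  have : r ≠ 0 := hr.ne'
  field_simp

theorem radial_W_equation (x : E4) (hx : x ≠ 0) :
    - lap (fun y => Wfun ‖y‖) x + Wfun ‖x‖ = 1 / ‖x‖^2 := by
  have hr : 0 < ‖x‖ := norm_pos_iff.2 hx
  have hrne : ‖x‖ ≠ 0 := hr.ne'
  have hsum : ∑ i : Fin 4, (x i)^2 = ‖x‖^2 := by
    rw [EuclideanSpace.norm_eq, Real.sq_sqrt (by positivity)]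
    simp [sq_abs]
  have hlap : lap (fun y => Wfun ‖y‖) x = W2 ‖x‖ + 3 * W1 ‖x‖ / ‖x‖ := by
    unfold lap
    rw [Finset.sum_congr rfl fun i _ => second_dir x hx i]
    rw [Finset.sum_congr rfl fun i _ => (by ring :
        W2 ‖x‖ * ((x i)^2 / ‖x‖^2) + W1 ‖x‖ * (1/‖x‖ - (x i)^2 / ‖x‖^3)
          = (W2 ‖x‖/‖x‖^2 - W1 ‖x‖/‖x‖^3) * (x i)^2 + W1 ‖x‖/‖x‖)]
    rw [Finset.sum_add_distrib, ← Finset.mul_sum, hsum, Finset.sum_const]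
    simp only [Finset.card_univ, Fintype.card_fin, nsmul_eq_mul]
    field_simp
    ring
  rw [hlap, ode2 hr, Wfun, besselK1_eq_Kn]
  field_simp
  ring
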